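/- Let δ ∈ (0, 1/8), let α_1, α_2, α_3, α_4 be complex numbers with |Re α_j| < δ for all j, and let s be a complex number with Re s > 1/2 + δ. Then ∑ m_1^{−(s+α_1)} m_2^{−(s+α_2)} n_1^{−(s−α_3)} n_2^{−(s−α_4)}, where the sum runs over all quadruples of positive integers (m_1, m_2, n_1, n_2) with m_1 m_2 = n_1 n_2, converges absolutely and equals ζ(2s+α_1−α_3) ζ(2s+α_1−α_4) ζ(2s+α_2−α_3) ζ(2s+α_2−α_4) / ζ(4s+α_1+α_2−α_3−α_4). -/

import Mathlib

open Complex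

private lemma pnat_ne_zero_c (a : ℕ+) : ((a : ℕ) : ℂ) ≠ 0 :=
  Nat.cast_ne_zero.mpr a.ne_zero

private lemma pnat_mul_cpow (x y : ℕ+) (z : ℂ) :
    (((x * y : ℕ+) : ℕ) : ℂ) ^ z = ((x : ℕ) : ℂ) ^ z * ((y : ℕ) : ℂ) ^ z := by
  push_cast
  exact natCast_mul_natCast_cpow (x : ℕ) (y : ℕ) z

private lemma zeta_pnat_tsum {w : ℂ} (hw : 1 < w.re) :
    riemannZeta w = ∑' n : ℕ+, ((n : ℕ) : ℂ) ^ (-w) := by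
  rw [zeta_eq_tsum_one_div_nat_cpow hw]
  have hinj : Function.Injective (fun n : ℕ+ => (n : ℕ)) := PNat.coe_injective
  have hsupp : Function.support (fun n : ℕ => 1 / (n : ℂ) ^ w) ⊆
      Set.range (fun n : ℕ+ => (n : ℕ)) := by
    intro n hn
    rcases Nat.eq_zero_or_pos n with h0 | h0
    · exfalso
      apply hn
      simp [h0, zero_cpow (ne_zero_of_one_lt_re hw)]
    · exact ⟨⟨n, h0⟩, rfl⟩
  rw [← hinj.tsum_eq hsupp]
  exact tsum_congr fun n => by rw [cpow_neg, one_div]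

private lemma summable_norm_pnat {w : ℂ} (hw : 1 < w.re) :
    Summable (fun n : ℕ+ => ‖((n : ℕ) : ℂ) ^ (-w)‖) := by
  have key : Summable (fun n : ℕ => ((n : ℝ)) ^ (-w.re)) :=
    Real.summable_nat_rpow.mpr (by linarith)
  have h2 : Summable (fun n : ℕ+ => (((n : ℕ) : ℝ)) ^ (-w.re)) :=
    key.comp_injective PNat.coe_injective
  refine h2.congr fun n => ?_
  rw [norm_natCast_cpow_of_pos n.pos, neg_re]

/-- The gcd-parametrization of pairs of positive integers by a positive integer
times a coprime pair. -/
private noncomputable def copEquiv : ℕ+ × {p : ℕ+ × ℕ+ // Nat.Coprime (p.1 : ℕ) (p.2 : ℕ)} ≃ ℕ+ × ℕ+ :=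
  Equiv.ofBijective (fun x => (x.1 * x.2.1.1, x.1 * x.2.1.2)) (by
    constructor
    · rintro ⟨e, ⟨⟨b, c⟩, h⟩⟩ ⟨e', ⟨⟨b', c'⟩, h'⟩⟩ heq
      simp only [Prod.mk.injEq] at heq
      obtain ⟨h1, h2⟩ := heq
      have h1' : (e : ℕ) * (b : ℕ) = (e' : ℕ) * (b' : ℕ) := by exact_mod_cast congrArg (fun t : ℕ+ => (t : ℕ)) h1
      have h2' : (e : ℕ) * (c : ℕ) = (e' : ℕ) * (c' : ℕ) := by exact_mod_cast congrArg (fun t : ℕ+ => (t : ℕ)) h2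
      have hee : (e : ℕ) = (e' : ℕ) := by
        have g1 : Nat.gcd ((e : ℕ) * b) ((e : ℕ) * c) = (e : ℕ) := by
          rw [Nat.gcd_mul_left, h, mul_one]
        have g2 : Nat.gcd ((e' : ℕ) * b') ((e' : ℕ) * c') = (e' : ℕ) := by
          rw [Nat.gcd_mul_left, h', mul_one]
        rw [← g1, h1', h2', g2]
      have he : e = e' := PNat.coe_injective hee
      subst he
      have hb : b = b' := PNat.coe_injective (Nat.eq_of_mul_eq_mul_left e.pos h1')
      have hc : c = c' := PNat.coe_injective (Nat.eq_of_mul_eq_mul_left e.pos h2')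
      subst hb; subst hc
      rfl
    · rintro ⟨m, n⟩
      have hg : 0 < Nat.gcd (m : ℕ) (n : ℕ) := Nat.gcd_pos_of_pos_left _ m.pos
      have hbm : 0 < (m : ℕ) / Nat.gcd (m : ℕ) (n : ℕ) :=
        Nat.div_pos (Nat.le_of_dvd m.pos (Nat.gcd_dvd_left _ _)) hg
      have hcn : 0 < (n : ℕ) / Nat.gcd (m : ℕ) (n : ℕ) :=
        Nat.div_pos (Nat.le_of_dvd n.pos (Nat.gcd_dvd_right _ _)) hg
      refine ⟨⟨⟨Nat.gcd (m : ℕ) (n : ℕ), hg⟩, ⟨⟨⟨_, hbm⟩, ⟨_, hcn⟩⟩,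
        Nat.coprime_div_gcd_div_gcd hg⟩⟩, ?_⟩
      refine Prod.ext (PNat.coe_injective ?_) (PNat.coe_injective ?_)
      · show Nat.gcd (m : ℕ) (n : ℕ) * ((m : ℕ) / Nat.gcd (m : ℕ) (n : ℕ)) = (m : ℕ)
        exact Nat.mul_div_cancel' (Nat.gcd_dvd_left _ _)
      · show Nat.gcd (m : ℕ) (n : ℕ) * ((n : ℕ) / Nat.gcd (m : ℕ) (n : ℕ)) = (n : ℕ)
        exact Nat.mul_div_cancel' (Nat.gcd_dvd_right _ _))

/-- Parametrization of quadruples `(m₁, m₂, n₁, n₂)` with `m₁ m₂ = n₁ n₂` as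
`m₁ = a b`, `m₂ = c d`, `n₁ = a c`, `n₂ = b d` with `gcd(b, c) = 1`. -/
private noncomputable def quadEquiv : ((ℕ+ × ℕ+) × {p : ℕ+ × ℕ+ // Nat.Coprime (p.1 : ℕ) (p.2 : ℕ)}) ≃
    {q : (ℕ+ × ℕ+) × (ℕ+ × ℕ+) // ((q.1.1 : ℕ) * (q.1.2 : ℕ)) = (q.2.1 : ℕ) * (q.2.2 : ℕ)} :=
  Equiv.ofBijective
    (fun x => ⟨((x.1.1 * x.2.1.1, x.2.1.2 * x.1.2), (x.1.1 * x.2.1.2, x.2.1.1 * x.1.2)),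
      by push_cast; ring⟩)
    (by
      constructor
      · rintro ⟨⟨a, d⟩, ⟨⟨b, c⟩, h⟩⟩ ⟨⟨a', d'⟩, ⟨⟨b', c'⟩, h'⟩⟩ heq
        simp only [Subtype.mk.injEq, Prod.mk.injEq] at heq
        obtain ⟨⟨e1, e2⟩, e3, e4⟩ := heq
        have e1' : (a : ℕ) * (b : ℕ) = (a' : ℕ) * (b' : ℕ) := by exact_mod_cast congrArg (fun t : ℕ+ => (t : ℕ)) e1
        have e3' : (a : ℕ) * (c : ℕ) = (a' : ℕ) * (c' : ℕ) := by exact_mod_cast congrArg (fun t : ℕ+ => (t : ℕ)) e3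
        have e4' : (b : ℕ) * (d : ℕ) = (b' : ℕ) * (d' : ℕ) := by exact_mod_cast congrArg (fun t : ℕ+ => (t : ℕ)) e4
        have hee : (a : ℕ) = (a' : ℕ) := by
          have g1 : Nat.gcd ((a : ℕ) * b) ((a : ℕ) * c) = (a : ℕ) := by
            rw [Nat.gcd_mul_left, h, mul_one]
          have g2 : Nat.gcd ((a' : ℕ) * b') ((a' : ℕ) * c') = (a' : ℕ) := by
            rw [Nat.gcd_mul_left, h', mul_one]
          rw [← g1, e1', e3', g2]
        have ha : a = a' := PNat.coe_injective hee
        subst ha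
        have hb : b = b' := PNat.coe_injective (Nat.eq_of_mul_eq_mul_left a.pos e1')
        have hc : c = c' := PNat.coe_injective (Nat.eq_of_mul_eq_mul_left a.pos e3')
        subst hb; subst hc
        have hd : d = d' := PNat.coe_injective
          (Nat.eq_of_mul_eq_mul_left b.pos e4')
        subst hd
        rfl
      · rintro ⟨⟨⟨m1, m2⟩, ⟨n1, n2⟩⟩, hq⟩
        have hq' : (m1 : ℕ) * (m2 : ℕ) = (n1 : ℕ) * (n2 : ℕ) := hq
        set g := Nat.gcd (m1 : ℕ) (n1 : ℕ) with hgdef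
        have hg : 0 < g := Nat.gcd_pos_of_pos_left _ m1.pos
        have hbm : 0 < (m1 : ℕ) / g :=
          Nat.div_pos (Nat.le_of_dvd m1.pos (Nat.gcd_dvd_left _ _)) hg
        have hcn : 0 < (n1 : ℕ) / g :=
          Nat.div_pos (Nat.le_of_dvd n1.pos (Nat.gcd_dvd_right _ _)) hg
        have hm1 : g * ((m1 : ℕ) / g) = (m1 : ℕ) := Nat.mul_div_cancel' (Nat.gcd_dvd_left _ _)
        have hn1 : g * ((n1 : ℕ) / g) = (n1 : ℕ) := Nat.mul_div_cancel' (Nat.gcd_dvd_right _ _)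
        have hcop : Nat.Coprime ((m1 : ℕ) / g) ((n1 : ℕ) / g) := Nat.coprime_div_gcd_div_gcd hg
        -- the key cancellation
        have key : ((m1 : ℕ) / g) * (m2 : ℕ) = ((n1 : ℕ) / g) * (n2 : ℕ) := by
          apply Nat.eq_of_mul_eq_mul_left hg
          calc g * (((m1 : ℕ) / g) * (m2 : ℕ)) = (g * ((m1 : ℕ) / g)) * (m2 : ℕ) := by ring
            _ = (m1 : ℕ) * (m2 : ℕ) := by rw [hm1]
            _ = (n1 : ℕ) * (n2 : ℕ) := hq'
            _ = (g * ((n1 : ℕ) / g)) * (n2 : ℕ) := by rw [hn1]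
            _ = g * (((n1 : ℕ) / g) * (n2 : ℕ)) := by ring
        have hdvd : ((n1 : ℕ) / g) ∣ (m2 : ℕ) := by
          have h1 : ((n1 : ℕ) / g) ∣ ((m1 : ℕ) / g) * (m2 : ℕ) := by
            rw [key]; exact Dvd.intro _ rfl
          exact (hcop.symm).dvd_of_dvd_mul_left h1
        have hdpos : 0 < (m2 : ℕ) / ((n1 : ℕ) / g) :=
          Nat.div_pos (Nat.le_of_dvd m2.pos hdvd) hcn
        refine ⟨⟨⟨⟨g, hg⟩, ⟨_, hdpos⟩⟩, ⟨⟨⟨_, hbm⟩, ⟨_, hcn⟩⟩, hcop⟩⟩, ?_⟩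
        have hm2 : ((n1 : ℕ) / g) * ((m2 : ℕ) / ((n1 : ℕ) / g)) = (m2 : ℕ) :=
          Nat.mul_div_cancel' hdvd
        have hn2 : ((m1 : ℕ) / g) * ((m2 : ℕ) / ((n1 : ℕ) / g)) = (n2 : ℕ) := by
          rw [← Nat.mul_div_assoc _ hdvd, key, Nat.mul_div_cancel_left _ hcn]
        apply Subtype.ext
        refine Prod.ext (Prod.ext (PNat.coe_injective ?_) (PNat.coe_injective ?_))
          (Prod.ext (PNat.coe_injective ?_) (PNat.coe_injective ?_))
        · exact hm1
        · exact hm2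
        · exact hn1
        · exact hn2)


private lemma quadEquiv_coe (x : (ℕ+ × ℕ+) × {p : ℕ+ × ℕ+ // Nat.Coprime (p.1 : ℕ) (p.2 : ℕ)}) :
    (quadEquiv x).1 =
      ((x.1.1 * x.2.1.1, x.2.1.2 * x.1.2), (x.1.1 * x.2.1.2, x.2.1.1 * x.1.2)) := rfl

private lemma key_term (s α₁ α₂ α₃ α₄ : ℂ) (a b c d : ℕ+) :
    (((a * b : ℕ+) : ℕ) : ℂ) ^ (-(s + α₁)) * (((c * d : ℕ+) : ℕ) : ℂ) ^ (-(s + α₂)) *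
      (((a * c : ℕ+) : ℕ) : ℂ) ^ (-(s - α₃)) * (((b * d : ℕ+) : ℕ) : ℂ) ^ (-(s - α₄)) =
    (((a : ℕ) : ℂ) ^ (-(2 * s + α₁ - α₃)) * ((d : ℕ) : ℂ) ^ (-(2 * s + α₂ - α₄))) *
      (((b : ℕ) : ℂ) ^ (-(2 * s + α₁ - α₄)) * ((c : ℕ) : ℂ) ^ (-(2 * s + α₂ - α₃))) := by
  rw [pnat_mul_cpow, pnat_mul_cpow, pnat_mul_cpow, pnat_mul_cpow,
    show -(2 * s + α₁ - α₃) = -(s + α₁) + -(s - α₃) by ring,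
    show -(2 * s + α₂ - α₄) = -(s + α₂) + -(s - α₄) by ring,
    show -(2 * s + α₁ - α₄) = -(s + α₁) + -(s - α₄) by ring,
    show -(2 * s + α₂ - α₃) = -(s + α₂) + -(s - α₃) by ring,
    cpow_add _ _ (pnat_ne_zero_c a), cpow_add _ _ (pnat_ne_zero_c b),
    cpow_add _ _ (pnat_ne_zero_c c), cpow_add _ _ (pnat_ne_zero_c d)]
  ring

private lemma key_cop {w₂ w₃ W : ℂ} (hW : w₂ + w₃ = W) (e b c : ℕ+) :
    (((e * b : ℕ+) : ℕ) : ℂ) ^ (-w₂) * (((e * c : ℕ+) : ℕ) : ℂ) ^ (-w₃) =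
      ((e : ℕ) : ℂ) ^ (-W) * (((b : ℕ) : ℂ) ^ (-w₂) * ((c : ℕ) : ℂ) ^ (-w₃)) := by
  rw [pnat_mul_cpow, pnat_mul_cpow, ← hW, show -(w₂ + w₃) = -w₂ + -w₃ by ring,
    cpow_add _ _ (pnat_ne_zero_c e)]
  ring

set_option maxHeartbeats 1600000 in
/-- **The shifted fourth-moment Dirichlet series of `ζ`:**
`∑_{m₁m₂=n₁n₂} m₁^{−(s+α₁)} m₂^{−(s+α₂)} n₁^{−(s−α₃)} n₂^{−(s−α₄)}` converges absolutely and
equals `ζ(2s+α₁−α₃)ζ(2s+α₁−α₄)ζ(2s+α₂−α₃)ζ(2s+α₂−α₄)/ζ(4s+α₁+α₂−α₃−α₄)`. -/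
theorem shifted_fourth_moment_dirichlet_series
    (δ : ℝ) (hδ0 : 0 < δ) (hδ : δ < 1 / 8)
    (α₁ α₂ α₃ α₄ : ℂ)
    (h1 : |α₁.re| < δ) (h2 : |α₂.re| < δ) (h3 : |α₃.re| < δ) (h4 : |α₄.re| < δ)
    (s : ℂ) (hs : 1 / 2 + δ < s.re) :
    Summable (fun p : {q : (ℕ+ × ℕ+) × (ℕ+ × ℕ+) //
        ((q.1.1 : ℕ) * (q.1.2 : ℕ)) = (q.2.1 : ℕ) * (q.2.2 : ℕ)} =>
      ((p.1.1.1 : ℕ) : ℂ) ^ (-(s + α₁)) * ((p.1.1.2 : ℕ) : ℂ) ^ (-(s + α₂)) *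
        ((p.1.2.1 : ℕ) : ℂ) ^ (-(s - α₃)) * ((p.1.2.2 : ℕ) : ℂ) ^ (-(s - α₄))) ∧
    (∑' p : {q : (ℕ+ × ℕ+) × (ℕ+ × ℕ+) //
        ((q.1.1 : ℕ) * (q.1.2 : ℕ)) = (q.2.1 : ℕ) * (q.2.2 : ℕ)},
      ((p.1.1.1 : ℕ) : ℂ) ^ (-(s + α₁)) * ((p.1.1.2 : ℕ) : ℂ) ^ (-(s + α₂)) *
        ((p.1.2.1 : ℕ) : ℂ) ^ (-(s - α₃)) * ((p.1.2.2 : ℕ) : ℂ) ^ (-(s - α₄)))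
    = riemannZeta (2 * s + α₁ - α₃) * riemannZeta (2 * s + α₁ - α₄) *
        riemannZeta (2 * s + α₂ - α₃) * riemannZeta (2 * s + α₂ - α₄) /
        riemannZeta (4 * s + α₁ + α₂ - α₃ - α₄) := by
  obtain ⟨h1l, h1r⟩ := abs_lt.mp h1
  obtain ⟨h2l, h2r⟩ := abs_lt.mp h2
  obtain ⟨h3l, h3r⟩ := abs_lt.mp h3
  obtain ⟨h4l, h4r⟩ := abs_lt.mp h4
  have hr1 : 1 < (2 * s + α₁ - α₃).re := by
    simp only [Complex.sub_re, Complex.add_re, Complex.mul_re, Complex.re_ofNat,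
      Complex.im_ofNat]
    linarith
  have hr2 : 1 < (2 * s + α₁ - α₄).re := by
    simp only [Complex.sub_re, Complex.add_re, Complex.mul_re, Complex.re_ofNat,
      Complex.im_ofNat]
    linarith
  have hr3 : 1 < (2 * s + α₂ - α₃).re := by
    simp only [Complex.sub_re, Complex.add_re, Complex.mul_re, Complex.re_ofNat,
      Complex.im_ofNat]
    linarith
  have hr4 : 1 < (2 * s + α₂ - α₄).re := by
    simp only [Complex.sub_re, Complex.add_re, Complex.mul_re, Complex.re_ofNat,
      Complex.im_ofNat]
    linarith
  have hrW : 1 < (4 * s + α₁ + α₂ - α₃ - α₄).re := by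
    simp only [Complex.sub_re, Complex.add_re, Complex.mul_re, Complex.re_ofNat,
      Complex.im_ofNat]
    linarith
  have hWsum : (2 * s + α₁ - α₄) + (2 * s + α₂ - α₃) = 4 * s + α₁ + α₂ - α₃ - α₄ := by ring
  -- the four shifted factors
  set f₁ : ℕ+ → ℂ := fun n => ((n : ℕ) : ℂ) ^ (-(2 * s + α₁ - α₃)) with hf₁
  set f₂ : ℕ+ → ℂ := fun n => ((n : ℕ) : ℂ) ^ (-(2 * s + α₁ - α₄)) with hf₂
  set f₃ : ℕ+ → ℂ := fun n => ((n : ℕ) : ℂ) ^ (-(2 * s + α₂ - α₃)) with hf₃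
  set f₄ : ℕ+ → ℂ := fun n => ((n : ℕ) : ℂ) ^ (-(2 * s + α₂ - α₄)) with hf₄
  set fW : ℕ+ → ℂ := fun n => ((n : ℕ) : ℂ) ^ (-(4 * s + α₁ + α₂ - α₃ - α₄)) with hfW
  have hns1 : Summable fun n => ‖f₁ n‖ := summable_norm_pnat hr1
  have hns2 : Summable fun n => ‖f₂ n‖ := summable_norm_pnat hr2
  have hns3 : Summable fun n => ‖f₃ n‖ := summable_norm_pnat hr3
  have hns4 : Summable fun n => ‖f₄ n‖ := summable_norm_pnat hr4
  have hnsW : Summable fun n => ‖fW n‖ := summable_norm_pnat hrW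
  have h14 : Summable fun p : ℕ+ × ℕ+ => ‖f₁ p.1 * f₄ p.2‖ := hns1.mul_norm hns4
  have h23 : Summable fun p : ℕ+ × ℕ+ => ‖f₂ p.1 * f₃ p.2‖ := hns2.mul_norm hns3
  have h23' : Summable fun p : {p : ℕ+ × ℕ+ // Nat.Coprime (p.1 : ℕ) (p.2 : ℕ)} =>
      ‖f₂ p.1.1 * f₃ p.1.2‖ := h23.comp_injective Subtype.coe_injective
  -- the coprime-pair sum
  set Csum : ℂ := ∑' p : {p : ℕ+ × ℕ+ // Nat.Coprime (p.1 : ℕ) (p.2 : ℕ)},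
    f₂ p.1.1 * f₃ p.1.2 with hCsum
  have hZW_ne : riemannZeta (4 * s + α₁ + α₂ - α₃ - α₄) ≠ 0 :=
    riemannZeta_ne_zero_of_one_lt_re hrW
  -- ζ(w₂)ζ(w₃) = ζ(W) * Csum
  have hcop : riemannZeta (2 * s + α₁ - α₄) * riemannZeta (2 * s + α₂ - α₃) =
      riemannZeta (4 * s + α₁ + α₂ - α₃ - α₄) * Csum := by
    calc riemannZeta (2 * s + α₁ - α₄) * riemannZeta (2 * s + α₂ - α₃)
        = (∑' n : ℕ+, f₂ n) * (∑' n : ℕ+, f₃ n) := by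
          rw [zeta_pnat_tsum hr2, zeta_pnat_tsum hr3]
      _ = ∑' p : ℕ+ × ℕ+, f₂ p.1 * f₃ p.2 := tsum_mul_tsum_of_summable_norm hns2 hns3
      _ = ∑' x : ℕ+ × {p : ℕ+ × ℕ+ // Nat.Coprime (p.1 : ℕ) (p.2 : ℕ)},
            f₂ (copEquiv x).1 * f₃ (copEquiv x).2 :=
          (copEquiv.tsum_eq fun p : ℕ+ × ℕ+ => f₂ p.1 * f₃ p.2).symm
      _ = ∑' x : ℕ+ × {p : ℕ+ × ℕ+ // Nat.Coprime (p.1 : ℕ) (p.2 : ℕ)},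
            fW x.1 * (f₂ x.2.1.1 * f₃ x.2.1.2) :=
          tsum_congr fun x => key_cop hWsum x.1 x.2.1.1 x.2.1.2
      _ = (∑' n : ℕ+, fW n) * Csum := (tsum_mul_tsum_of_summable_norm hnsW h23').symm
      _ = riemannZeta (4 * s + α₁ + α₂ - α₃ - α₄) * Csum := by
          rw [zeta_pnat_tsum hrW]
  -- the composed big term
  have hcomp : ∀ x : (ℕ+ × ℕ+) × {p : ℕ+ × ℕ+ // Nat.Coprime (p.1 : ℕ) (p.2 : ℕ)},
      (((quadEquiv x).1.1.1 : ℕ) : ℂ) ^ (-(s + α₁)) *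
        (((quadEquiv x).1.1.2 : ℕ) : ℂ) ^ (-(s + α₂)) *
        (((quadEquiv x).1.2.1 : ℕ) : ℂ) ^ (-(s - α₃)) *
        (((quadEquiv x).1.2.2 : ℕ) : ℂ) ^ (-(s - α₄)) =
      (f₁ x.1.1 * f₄ x.1.2) * (f₂ x.2.1.1 * f₃ x.2.1.2) := by
    intro x
    rw [quadEquiv_coe]
    exact key_term s α₁ α₂ α₃ α₄ x.1.1 x.2.1.1 x.2.1.2 x.1.2
  have hGnorm : Summable fun x : (ℕ+ × ℕ+) × {p : ℕ+ × ℕ+ // Nat.Coprime (p.1 : ℕ) (p.2 : ℕ)} =>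
      ‖(f₁ x.1.1 * f₄ x.1.2) * (f₂ x.2.1.1 * f₃ x.2.1.2)‖ :=
    Summable.mul_norm (f := fun p : ℕ+ × ℕ+ => f₁ p.1 * f₄ p.2)
      (g := fun p : {p : ℕ+ × ℕ+ // Nat.Coprime (p.1 : ℕ) (p.2 : ℕ)} => f₂ p.1.1 * f₃ p.1.2)
      h14 h23'
  have hG : Summable fun x : (ℕ+ × ℕ+) × {p : ℕ+ × ℕ+ // Nat.Coprime (p.1 : ℕ) (p.2 : ℕ)} =>
      (f₁ x.1.1 * f₄ x.1.2) * (f₂ x.2.1.1 * f₃ x.2.1.2) := hGnorm.of_norm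
  have hFcompSummable : Summable fun x :
      (ℕ+ × ℕ+) × {p : ℕ+ × ℕ+ // Nat.Coprime (p.1 : ℕ) (p.2 : ℕ)} =>
      (((quadEquiv x).1.1.1 : ℕ) : ℂ) ^ (-(s + α₁)) *
        (((quadEquiv x).1.1.2 : ℕ) : ℂ) ^ (-(s + α₂)) *
        (((quadEquiv x).1.2.1 : ℕ) : ℂ) ^ (-(s - α₃)) *
        (((quadEquiv x).1.2.2 : ℕ) : ℂ) ^ (-(s - α₄)) :=
    hG.congr fun x => (hcomp x).symm
  have hFSummable : Summable (fun p : {q : (ℕ+ × ℕ+) × (ℕ+ × ℕ+) //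
      ((q.1.1 : ℕ) * (q.1.2 : ℕ)) = (q.2.1 : ℕ) * (q.2.2 : ℕ)} =>
      ((p.1.1.1 : ℕ) : ℂ) ^ (-(s + α₁)) * ((p.1.1.2 : ℕ) : ℂ) ^ (-(s + α₂)) *
        ((p.1.2.1 : ℕ) : ℂ) ^ (-(s - α₃)) * ((p.1.2.2 : ℕ) : ℂ) ^ (-(s - α₄))) :=
    quadEquiv.summable_iff.mp hFcompSummable
  refine ⟨hFSummable, ?_⟩
  have hmain : (∑' p : {q : (ℕ+ × ℕ+) × (ℕ+ × ℕ+) //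
      ((q.1.1 : ℕ) * (q.1.2 : ℕ)) = (q.2.1 : ℕ) * (q.2.2 : ℕ)},
      ((p.1.1.1 : ℕ) : ℂ) ^ (-(s + α₁)) * ((p.1.1.2 : ℕ) : ℂ) ^ (-(s + α₂)) *
        ((p.1.2.1 : ℕ) : ℂ) ^ (-(s - α₃)) * ((p.1.2.2 : ℕ) : ℂ) ^ (-(s - α₄)))
      = (riemannZeta (2 * s + α₁ - α₃) * riemannZeta (2 * s + α₂ - α₄)) * Csum := by
    calc (∑' p : {q : (ℕ+ × ℕ+) × (ℕ+ × ℕ+) //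
        ((q.1.1 : ℕ) * (q.1.2 : ℕ)) = (q.2.1 : ℕ) * (q.2.2 : ℕ)},
        ((p.1.1.1 : ℕ) : ℂ) ^ (-(s + α₁)) * ((p.1.1.2 : ℕ) : ℂ) ^ (-(s + α₂)) *
          ((p.1.2.1 : ℕ) : ℂ) ^ (-(s - α₃)) * ((p.1.2.2 : ℕ) : ℂ) ^ (-(s - α₄)))
        = ∑' x : (ℕ+ × ℕ+) × {p : ℕ+ × ℕ+ // Nat.Coprime (p.1 : ℕ) (p.2 : ℕ)},
            (((quadEquiv x).1.1.1 : ℕ) : ℂ) ^ (-(s + α₁)) *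
              (((quadEquiv x).1.1.2 : ℕ) : ℂ) ^ (-(s + α₂)) *
              (((quadEquiv x).1.2.1 : ℕ) : ℂ) ^ (-(s - α₃)) *
              (((quadEquiv x).1.2.2 : ℕ) : ℂ) ^ (-(s - α₄)) :=
          (quadEquiv.tsum_eq _).symm
      _ = ∑' x : (ℕ+ × ℕ+) × {p : ℕ+ × ℕ+ // Nat.Coprime (p.1 : ℕ) (p.2 : ℕ)},
            (f₁ x.1.1 * f₄ x.1.2) * (f₂ x.2.1.1 * f₃ x.2.1.2) := tsum_congr hcomp
      _ = (∑' p : ℕ+ × ℕ+, f₁ p.1 * f₄ p.2) * Csum :=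
          (tsum_mul_tsum_of_summable_norm h14 h23').symm
      _ = ((∑' n : ℕ+, f₁ n) * (∑' n : ℕ+, f₄ n)) * Csum := by
          rw [tsum_mul_tsum_of_summable_norm hns1 hns4]
      _ = (riemannZeta (2 * s + α₁ - α₃) * riemannZeta (2 * s + α₂ - α₄)) * Csum := by
          rw [zeta_pnat_tsum hr1, zeta_pnat_tsum hr4]
  rw [hmain]
  have hC : Csum = riemannZeta (2 * s + α₁ - α₄) * riemannZeta (2 * s + α₂ - α₃) /
      riemannZeta (4 * s + α₁ + α₂ - α₃ - α₄) := by
    rw [eq_div_iff hZW_ne]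
    linear_combination hcop.symm
  rw [hC]
  field_simp
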